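/- Let (X_n, μ_n) be compact metric measure spaces forming an inverse system with 1-Lipschitz surjective bonding maps π_{n+1,n} such that (π_{n+1,n})_* μ_{n+1} = μ_n and sup_{x∈X_n} diam(π_{∞,n}^{-1}(x)) → 0. Then there exists a unique Radon measure μ_∞ on the inverse limit X_∞ with (π_{∞,n})_* μ_∞ = μ_n for every n. -/

import Mathlib

open Filter MeasureTheory
open scoped ENNReal NNReal Topology

/-- The inverse limit of a tower of spaces `X n` with bonding maps `π n : X (n+1) → X n`. -/
def InvLim (X : ℕ → Type*) (π : ∀ n, X (n + 1) → X n) : Type _ :=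
  {x : ∀ n, X n // ∀ n, π n (x (n + 1)) = x n}

instance (X : ℕ → Type*) [∀ n, TopologicalSpace (X n)] (π : ∀ n, X (n + 1) → X n) :
    TopologicalSpace (InvLim X π) :=
  instTopologicalSpaceSubtype

instance (X : ℕ → Type*) [∀ n, MeasurableSpace (X n)] (π : ∀ n, X (n + 1) → X n) :
    MeasurableSpace (InvLim X π) :=
  Subtype.instMeasurableSpace

/-- The limsup distance on the inverse limit. -/
noncomputable def invLimDist {X : ℕ → Type*} [∀ n, MetricSpace (X n)]
    (π : ∀ n, X (n + 1) → X n) (x y : InvLim X π) : ℝ :=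
  Filter.limsup (fun n => dist (x.1 n) (y.1 n)) Filter.atTop

namespace InvLimAux

variable {X : ℕ → Type*} (π : ∀ n, X (n + 1) → X n)

/-- Downward bonding map `X (m + k) → X m`. -/
def down : ∀ (k m : ℕ), X (m + k) → X m :=
  fun k => Nat.rec (motive := fun k => ∀ m, X (m + k) → X m)
    (fun _ x => x) (fun k ih m x => ih m (π (m + k) x)) k

@[simp] theorem down_zero (m : ℕ) (x : X (m + 0)) : down π 0 m x = x := rfl

theorem down_succ (k m : ℕ) (x : X (m + (k + 1))) :
    down π (k + 1) m x = down π k m (π (m + k) x) := rfl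

theorem down_coherent (x : InvLim X π) :
    ∀ k m, down π k m (x.1 (m + k)) = x.1 m := by
  intro k
  induction k with
  | zero => intro m; rfl
  | succ k ih =>
      intro m
      show down π k m (π (m + k) (x.1 ((m + k) + 1))) = x.1 m
      rw [x.2 (m + k)]; exact ih m

theorem down_continuous [∀ n, TopologicalSpace (X n)] (hc : ∀ n, Continuous (π n)) :
    ∀ k m, Continuous (down π k m) := by
  intro k
  induction k with
  | zero => intro m; exact continuous_id
  | succ k ih => intro m; exact (ih m).comp (hc (m + k))

/-- Cast along an equality of indices. -/
def castX {a b : ℕ} (h : a = b) (x : X a) : X b := h ▸ x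

theorem castX_castX {a b c : ℕ} (h : a = b) (h' : b = c) (x : X a) :
    castX h' (castX h x) = castX (h.trans h') x := by subst h h'; rfl

theorem castX_pi {a b : ℕ} (h : a = b) (h' : a + 1 = b + 1) (x : X (a + 1)) :
    π b (castX h' x) = castX h (π a x) := by
  subst h; rfl

theorem pi_down (k m : ℕ) (h : m + 1 + k = m + (k + 1)) (y : X (m + 1 + k)) :
    π m (down π k (m + 1) y) = down π (k + 1) m (castX h y) := by
  induction k with
  | zero => rfl
  | succ k ih =>
      have e : m + 1 + k = m + (k + 1) := by omega
      calc π m (down π (k + 1) (m + 1) y)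
          = π m (down π k (m + 1) (π (m + 1 + k) y)) := rfl
        _ = down π (k + 1) m (castX e (π (m + 1 + k) y)) := ih e _
        _ = down π (k + 1) m (π (m + (k + 1)) (castX h y)) := by rw [castX_pi π e h y]
        _ = down π (k + 1 + 1) m (castX h y) := rfl

/-- Every point of `X n` lifts to a point of the inverse limit. -/
theorem exists_lift (hsurj : ∀ n, Function.Surjective (π n)) (n : ℕ) (t : X n) :
    ∃ x : InvLim X π, x.1 n = t := by
  let σ : ∀ k, X (n + k) := fun k => Nat.rec (motive := fun k => X (n + k)) t
    (fun k y => (hsurj (n + k) y).choose) k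
  have hσ : ∀ k, π (n + k) (σ (k + 1)) = σ k := fun k => (hsurj (n + k) (σ k)).choose_spec
  refine ⟨⟨fun m => down π n m (castX (Nat.add_comm n m) (σ m)), ?_⟩, ?_⟩
  · intro m
    have e : n + (m + 1) = m + 1 + n := Nat.add_comm _ _
    have e2 : m + 1 + n = m + (n + 1) := by omega
    have e3 : n + m = m + n := Nat.add_comm _ _
    show π m (down π n (m + 1) (castX e (σ (m + 1)))) = down π n m (castX e3 (σ m))
    calc π m (down π n (m + 1) (castX e (σ (m + 1))))
        = down π (n + 1) m (castX e2 (castX e (σ (m + 1)))) := pi_down π n m e2 _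
      _ = down π n m (π (m + n) (castX (e.trans e2) (σ (m + 1)))) := by
          rw [castX_castX e e2 (σ (m + 1))]; exact down_succ π n m _
      _ = down π n m (castX e3 (π (n + m) (σ (m + 1)))) := by
          rw [castX_pi π e3 (e.trans e2) (σ (m + 1))]
      _ = down π n m (castX e3 (σ m)) := by rw [hσ m]
  · have C : ∀ k, down π k n (σ k) = t := by
      intro k
      induction k with
      | zero => rfl
      | succ k ih => rw [down_succ, hσ k]; exact ih
    show down π n n (castX (Nat.add_comm n n) (σ n)) = t
    have h0 : castX (Nat.add_comm n n) (σ n) = σ n := rfl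
    rw [h0]; exact C n

theorem comap_pi_le {Z : Type*} [m : MeasurableSpace Z] {Y : ℕ → Type*}
    [∀ n, MeasurableSpace (Y n)] (g : Z → ∀ n, Y n)
    (h : ∀ n, Measurable fun z => g z n) :
    MeasurableSpace.comap g MeasurableSpace.pi ≤ m :=
  measurable_iff_comap_le.mp (measurable_pi_iff.mpr h)

theorem coord_eq_of_coord_eq (x y : InvLim X π) {a b : ℕ} (h : a ≤ b)
    (hxy : x.1 b = y.1 b) : x.1 a = y.1 a := by
  obtain ⟨k, rfl⟩ := Nat.exists_eq_add_of_le h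
  rw [← down_coherent π x k a, ← down_coherent π y k a, hxy]

end InvLimAux

open InvLimAux

theorem inverse_limit_measure (X : ℕ → Type*) [∀ n, MetricSpace (X n)]
    [∀ n, CompactSpace (X n)] [∀ n, Nonempty (X n)]
    [∀ n, MeasurableSpace (X n)] [∀ n, BorelSpace (X n)]
    (π : ∀ n, X (n + 1) → X n)
    (hsurj : ∀ n, Function.Surjective (π n))
    (hlip : ∀ n, LipschitzWith 1 (π n))
    (μs : ∀ n, Measure (X n)) (hprob : ∀ n, IsProbabilityMeasure (μs n))
    (hcompat : ∀ n, (μs (n + 1)).map (π n) = μs n)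
    (hfib : ∀ ε : ℝ, 0 < ε → ∃ N, ∀ n ≥ N, ∀ x y : InvLim X π,
      x.1 n = y.1 n → invLimDist π x y ≤ ε) :
    ∃! μ : Measure (InvLim X π),
      μ.Regular ∧ ∀ n, μ.map (fun x : InvLim X π => x.1 n) = μs n := by
  clear hfib
  have hcπ : ∀ n, Continuous (π n) := fun n => (hlip n).continuous
  -- instances on the inverse limit
  haveI hSC : ∀ n, SecondCountableTopology (X n) := fun n => inferInstance
  haveI : CompactSpace (InvLim X π) := by
    have h0 : {x : ∀ n, X n | ∀ n, π n (x (n + 1)) = x n}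
        = ⋂ n, {x : ∀ n, X n | π n (x (n + 1)) = x n} := by
      ext x; simp [Set.mem_iInter]
    have h1 : IsClosed {x : ∀ n, X n | ∀ n, π n (x (n + 1)) = x n} := by
      rw [h0]
      exact isClosed_iInter (fun n => isClosed_eq ((hcπ n).comp (continuous_apply (n + 1)))
        (continuous_apply n))
    exact isCompact_iff_compactSpace.mp h1.isCompact
  haveI : T2Space (InvLim X π) :=
    inferInstanceAs (T2Space {x : ∀ n, X n // ∀ n, π n (x (n + 1)) = x n})
  haveI : SecondCountableTopology (InvLim X π) :=
    inferInstanceAs (SecondCountableTopology ↥{x : ∀ n, X n | ∀ n, π n (x (n + 1)) = x n})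
  haveI : BorelSpace (InvLim X π) := Subtype.borelSpace _
  -- the projections
  set p : ∀ n, InvLim X π → X n := fun n x => x.1 n with hp
  have hpc : ∀ n, Continuous (p n) := fun n => (continuous_apply n).comp continuous_subtype_val
  have hpm : ∀ n, Measurable (p n) := fun n => (hpc n).measurable
  -- measurability of images of compact sets
  have himgm : ∀ (K : Set (InvLim X π)), IsCompact K → ∀ m, MeasurableSet (p m '' K) :=
    fun K hK m => (hK.image (hpc m)).isClosed.measurableSet
  -- antitonicity of the level measures
  have hanti : ∀ (K : Set (InvLim X π)), IsCompact K →
      Antitone (fun m => μs m (p m '' K)) := by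
    intro K hK
    apply antitone_nat_of_succ_le
    intro m
    have him : π m '' (p (m + 1) '' K) = p m '' K := by
      rw [Set.image_image]
      exact Set.image_congr (fun x _ => x.2 m)
    have hm1 : MeasurableSet (π m '' (p (m + 1) '' K)) := by
      rw [him]; exact himgm K hK m
    calc μs (m + 1) (p (m + 1) '' K)
        ≤ μs (m + 1) (π m ⁻¹' (π m '' (p (m + 1) '' K))) :=
          measure_mono (Set.subset_preimage_image _ _)
      _ = μs m (π m '' (p (m + 1) '' K)) := by
          rw [← hcompat m, Measure.map_apply (hcπ m).measurable hm1]
      _ = μs m (p m '' K) := by rw [him]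
  -- finiteness
  have hfinK : ∀ (K : Set (InvLim X π)), (⨅ m, μs m (p m '' K)) ≠ ⊤ :=
    fun K => ne_top_of_le_ne_top (measure_ne_top (μs 0) _) (iInf_le _ 0)
  -- the measures of preimages along bonding maps
  have h9 : ∀ n (B : Set (X n)), MeasurableSet B → ∀ k,
      μs (n + k) (down π k n ⁻¹' B) = μs n B := by
    intro n B hB k
    induction k with
    | zero => rfl
    | succ k ih =>
        have e : MeasurableSet (down π k n ⁻¹' B) := (down_continuous π hcπ k n).measurable hB
        show (μs ((n + k) + 1)) (π (n + k) ⁻¹' (down π k n ⁻¹' B)) = μs n B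
        rw [← Measure.map_apply (hcπ (n + k)).measurable e, hcompat (n + k)]
        exact ih
  -- images of cylinder sets
  have h10 : ∀ n (B : Set (X n)) k, p (n + k) '' (p n ⁻¹' B) = down π k n ⁻¹' B := by
    intro n B k
    ext y
    constructor
    · rintro ⟨x, hx, rfl⟩
      show down π k n (x.1 (n + k)) ∈ B
      rw [down_coherent π x k n]; exact hx
    · intro hy
      obtain ⟨x, hx⟩ := exists_lift π hsurj (n + k) y
      refine ⟨x, ?_, hx⟩
      show x.1 n ∈ B
      rw [← down_coherent π x k n, hx]; exact hy
  -- the key computation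
  have hkey : ∀ n (B : Set (X n)), IsClosed B →
      (⨅ m, μs m (p m '' (p n ⁻¹' B))) = μs n B := by
    intro n B hB
    have hKc : IsCompact (p n ⁻¹' B) := (hB.preimage (hpc n)).isCompact
    apply le_antisymm
    · refine iInf_le_of_le n (le_of_eq ?_)
      have := h10 n B 0
      -- `p (n + 0) '' (p n ⁻¹' B) = B` by definitional unfolding
      exact congrArg (μs n) this
    · refine le_iInf fun m => ?_
      rcases le_total n m with h | h
      · obtain ⟨k, rfl⟩ := Nat.exists_eq_add_of_le h
        rw [h10 n B k, h9 n B hB.measurableSet k]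
      · have h1 : μs n (p n '' (p n ⁻¹' B)) = μs n B := congrArg (μs n) (h10 n B 0)
        exact le_trans (le_of_eq h1.symm) (hanti _ hKc h)
  -- eventually-equal antitone sequences have the same infimum
  have hIeq : ∀ (f g : ℕ → ℝ≥0∞), Antitone f → Antitone g →
      (∃ N, ∀ m, N ≤ m → f m = g m) → (⨅ m, f m) = ⨅ m, g m := by
    rintro f g hf hg ⟨N, hN⟩
    apply le_antisymm
    · refine le_iInf fun m => iInf_le_of_le (max m N) ?_
      rw [hN _ (le_max_right m N)]
      exact hg (le_max_left m N)
    · refine le_iInf fun m => iInf_le_of_le (max m N) ?_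
      rw [← hN _ (le_max_right m N)]
      exact hf (le_max_left m N)
  -- eventual disjointness of images of disjoint compact sets
  have hdisjN : ∀ K1 K2 : Set (InvLim X π), IsCompact K1 → IsCompact K2 →
      Disjoint K1 K2 → ∃ N, ∀ m, N ≤ m → Disjoint (p m '' K1) (p m '' K2) := by
    intro K1 K2 hK1 hK2 hd
    have hstep : ∃ N, Disjoint (p N '' K1) (p N '' K2) := by
      by_contra hcon
      push_neg at hcon
      have hNE : ∀ N, ∃ x, x ∈ K1 ∧ ∃ y, y ∈ K2 ∧ x.1 N = y.1 N := by
        intro N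
        obtain ⟨t, ht1, ht2⟩ := Set.not_disjoint_iff.mp (hcon N)
        obtain ⟨x, hx, hxe⟩ := ht1
        obtain ⟨y, hy, hye⟩ := ht2
        exact ⟨x, hx, y, hy, hxe.trans hye.symm⟩
      choose u hu v hv heq using hNE
      obtain ⟨x, hxK, φ, hφ, hxt⟩ := hK1.tendsto_subseq hu
      obtain ⟨y, hyK, ψ, hψ, hyt⟩ := hK2.tendsto_subseq (fun k => hv (φ k))
      have hxt' : Tendsto (fun k => u (φ (ψ k))) atTop (𝓝 x) :=
        hxt.comp hψ.tendsto_atTop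
      have hxy : x = y := by
        apply Subtype.ext
        funext j
        have T1 : Tendsto (fun k => (u (φ (ψ k))).1 j) atTop (𝓝 (x.1 j)) :=
          ((hpc j).tendsto x).comp hxt'
        have T2 : Tendsto (fun k => (v (φ (ψ k))).1 j) atTop (𝓝 (y.1 j)) :=
          ((hpc j).tendsto y).comp hyt
        have hev : (fun k => (u (φ (ψ k))).1 j) =ᶠ[atTop] (fun k => (v (φ (ψ k))).1 j) := by
          filter_upwards [eventually_ge_atTop j] with k hk
          exact coord_eq_of_coord_eq π _ _ (hk.trans ((hψ.le_apply).trans hφ.le_apply))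
            (heq (φ (ψ k)))
        exact tendsto_nhds_unique_of_eventuallyEq T1 T2 hev
      exact Set.disjoint_left.mp hd hxK (hxy ▸ hyK)
    obtain ⟨N, hN⟩ := hstep
    refine ⟨N, fun m hm => Set.disjoint_left.mpr ?_⟩
    rintro t ⟨x, hx, rfl⟩ ⟨z, hz, hzy⟩
    have : x.1 N = z.1 N := coord_eq_of_coord_eq π x z hm hzy.symm
    exact Set.disjoint_left.mp hN ⟨x, hx, rfl⟩ ⟨z, hz, this.symm⟩
  -- the content
  set lamf : TopologicalSpace.Compacts (InvLim X π) → ℝ≥0∞ :=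
    fun K => ⨅ m, μs m (p m '' K.1) with hlamf
  have hadd : ∀ K1 K2 : TopologicalSpace.Compacts (InvLim X π),
      (⨅ m, μs m (p m '' K1.1)) + (⨅ m, μs m (p m '' K2.1))
        = ⨅ m, (μs m (p m '' K1.1) + μs m (p m '' K2.1)) := by
    intro K1 K2
    apply ENNReal.iInf_add_iInf
    intro i j
    exact ⟨max i j, add_le_add (hanti _ K1.2 (le_max_left i j)) (hanti _ K2.2 (le_max_right i j))⟩
  set lam : Content (InvLim X π) :=
    { toFun := fun K => (lamf K).toNNReal
      mono' := by
        intro K1 K2 h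
        exact ENNReal.toNNReal_mono (hfinK _)
          (iInf_mono fun m => measure_mono (Set.image_mono h))
      sup_disjoint' := by
        intro K1 K2 hd _ _
        obtain ⟨N, hN⟩ := hdisjN K1.1 K2.1 K1.2 K2.2 hd
        have hle : lamf (K1 ⊔ K2) = lamf K1 + lamf K2 := by
          rw [hlamf]
          simp only
          rw [hadd K1 K2]
          refine hIeq _ _ (hanti _ (K1 ⊔ K2).2) ?_ ⟨N, fun m hm => ?_⟩
          · intro a b hab
            exact add_le_add (hanti _ K1.2 hab) (hanti _ K2.2 hab)
          · have him : p m '' ((K1 ⊔ K2) : TopologicalSpace.Compacts (InvLim X π)).1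
                = p m '' K1.1 ∪ p m '' K2.1 := Set.image_union _ _ _
            rw [him, measure_union (hN m hm) (himgm _ K2.2 m)]
        show (lamf (K1 ⊔ K2)).toNNReal = (lamf K1).toNNReal + (lamf K2).toNNReal
        rw [hle, ENNReal.toNNReal_add (hfinK _) (hfinK _)]
      sup_le' := by
        intro K1 K2
        show (lamf (K1 ⊔ K2)).toNNReal ≤ (lamf K1).toNNReal + (lamf K2).toNNReal
        rw [← ENNReal.toNNReal_add (hfinK _) (hfinK _)]
        refine ENNReal.toNNReal_mono (by
          exact ENNReal.add_ne_top.mpr ⟨hfinK _, hfinK _⟩) ?_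
        rw [hadd K1 K2]
        refine iInf_mono fun m => ?_
        have him : p m '' ((K1 ⊔ K2) : TopologicalSpace.Compacts (InvLim X π)).1
            = p m '' K1.1 ∪ p m '' K2.1 := Set.image_union _ _ _
        rw [him]
        exact measure_union_le _ _ } with hlam
  have hlam_coe : ∀ K : TopologicalSpace.Compacts (InvLim X π),
      (lam K : ℝ≥0∞) = lamf K := fun K => ENNReal.coe_toNNReal (hfinK _)
  -- content regularity
  have hreg : MeasureTheory.Content.ContentRegular lam := by
    intro K
    apply le_antisymm
    · exact le_iInf fun K' => le_iInf fun h => lam.mono _ _ (h.trans interior_subset)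
    · apply ENNReal.le_of_forall_pos_le_add
      intro ε hε _
      have hε2 : ((ε / 2 : ℝ≥0) : ℝ≥0∞) ≠ 0 := by
        simp only [ne_eq, ENNReal.coe_eq_zero]
        positivity
      have h1 : lamf K < lamf K + (ε / 2 : ℝ≥0) :=
        ENNReal.lt_add_right (hfinK _) hε2
      obtain ⟨m, hm⟩ := iInf_lt_iff.mp h1
      obtain ⟨U, hAU, hUopen, hU⟩ := Set.exists_isOpen_lt_add (μ := μs m) (p m '' K.1)
        (measure_ne_top _ _) hε2
      obtain ⟨V, hVopen, hAV, hVU⟩ := normal_exists_closure_subset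
        ((K.2.image (hpc m)).isClosed) hUopen hAU
      set K' : TopologicalSpace.Compacts (InvLim X π) :=
        ⟨p m ⁻¹' closure V, (isClosed_closure.preimage (hpc m)).isCompact⟩ with hK'
      have hsub : K.1 ⊆ interior K'.1 := by
        refine Set.Subset.trans ?_ (interior_maximal
          (Set.preimage_mono subset_closure) ((hVopen.preimage (hpc m))))
        intro x hx
        exact hAV ⟨x, hx, rfl⟩
      refine iInf_le_of_le K' (iInf_le_of_le hsub ?_)
      have hb : lamf K' ≤ μs m U := by
        refine (iInf_le _ m).trans ?_
        refine (measure_mono ?_).trans (measure_mono hVU)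
        exact Set.image_preimage_subset _ _
      rw [hlam_coe K', hlam_coe K]
      calc lamf K' ≤ μs m U := hb
        _ ≤ μs m (p m '' K.1) + (ε / 2 : ℝ≥0) := le_of_lt hU
        _ ≤ (lamf K + (ε / 2 : ℝ≥0)) + (ε / 2 : ℝ≥0) := by
            exact add_le_add (le_of_lt hm) le_rfl
        _ = lamf K + ε := by
            rw [add_assoc, ← ENNReal.coe_add, add_halves]
  -- the measure
  set μ : Measure (InvLim X π) := lam.measure with hμ
  have hmeasK : ∀ B : Set (InvLim X π), ∀ hc : IsCompact B, μ B = lamf ⟨B, hc⟩ := by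
    intro B hc
    rw [hμ]
    exact (MeasureTheory.Content.measure_eq_content_of_regular lam hreg ⟨B, hc⟩).trans
      (hlam_coe ⟨B, hc⟩)
  have hkeyC : ∀ n (B : Set (X n)), IsClosed B → μ (p n ⁻¹' B) = μs n B := by
    intro n B hB
    rw [hmeasK (p n ⁻¹' B) ((hB.preimage (hpc n)).isCompact)]
    exact hkey n B hB
  haveI hPμ : IsProbabilityMeasure μ := by
    constructor
    have := hkeyC 0 Set.univ isClosed_univ
    simp only [Set.preimage_univ] at this
    rw [this]
    exact measure_univ
  -- pushforward property
  have hmap : ∀ n, μ.map (p n) = μs n := by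
    intro n
    haveI : IsProbabilityMeasure (μ.map (p n)) :=
      Measure.isProbabilityMeasure_map (hpm n).aemeasurable
    refine ext_of_generate_finite {s : Set (X n) | IsClosed s} ?_ isPiSystem_isClosed
      (fun s hs => ?_) ?_
    · rw [BorelSpace.measurable_eq (α := X n), borel_eq_generateFrom_isClosed]
    · rw [Measure.map_apply (hpm n) hs.measurableSet]
      exact hkeyC n s hs
    · simp [measure_univ]
  -- uniqueness
  have huniq : ∀ ν₁ ν₂ : Measure (InvLim X π),
      (∀ n, ν₁.map (p n) = μs n) → (∀ n, ν₂.map (p n) = μs n) → ν₁ = ν₂ := by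
    intro ν₁ ν₂ h₁ h₂
    have hPν : ∀ (ν : Measure (InvLim X π)), (∀ n, ν.map (p n) = μs n) →
        IsProbabilityMeasure ν := by
      intro ν hν
      constructor
      have h0 : (ν.map (p 0)) Set.univ = μs 0 Set.univ := by rw [hν 0]
      rw [Measure.map_apply (hpm 0) MeasurableSet.univ, Set.preimage_univ] at h0
      rw [h0]; exact measure_univ
    haveI := hPν ν₁ h₁
    haveI := hPν ν₂ h₂
    set C : Set (Set (InvLim X π)) :=
      {S | ∃ n, ∃ B : Set (X n), MeasurableSet B ∧ S = p n ⁻¹' B} with hC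
    have hgen : (inferInstance : MeasurableSpace (InvLim X π)) =
        MeasurableSpace.generateFrom C := by
      apply le_antisymm
      · have hmeas : ∀ n, @Measurable _ _ (MeasurableSpace.generateFrom C) _ (p n) := by
          intro n B hB
          exact MeasurableSpace.measurableSet_generateFrom ⟨n, B, hB, rfl⟩
        exact @comap_pi_le _ (MeasurableSpace.generateFrom C) _ _
          (Subtype.val : InvLim X π → ∀ n, X n) hmeas
      · refine MeasurableSpace.generateFrom_le ?_
        rintro S ⟨n, B, hB, rfl⟩
        exact (hpm n) hB
    have hcyl : ∀ (n k : ℕ) (B : Set (X n)),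
        p n ⁻¹' B = p (n + k) ⁻¹' (down π k n ⁻¹' B) := by
      intro n k B
      ext x
      show x.1 n ∈ B ↔ down π k n (x.1 (n + k)) ∈ B
      rw [down_coherent π x k n]
    have hpi : IsPiSystem C := by
      rintro S ⟨n, B, hB, rfl⟩ T ⟨m, B', hB', rfl⟩ -
      rcases le_total n m with h | h
      · obtain ⟨k, rfl⟩ := Nat.exists_eq_add_of_le h
        rw [hcyl n k B]
        exact ⟨n + k, (down π k n ⁻¹' B) ∩ B',
          ((down_continuous π hcπ k n).measurable hB).inter hB',
          by rw [Set.preimage_inter]⟩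
      · obtain ⟨k, rfl⟩ := Nat.exists_eq_add_of_le h
        rw [hcyl m k B']
        exact ⟨m + k, B ∩ (down π k m ⁻¹' B'),
          hB.inter ((down_continuous π hcπ k m).measurable hB'),
          by rw [Set.preimage_inter]⟩
    refine ext_of_generate_finite C hgen hpi (fun s hs => ?_) ?_
    · obtain ⟨n, B, hB, rfl⟩ := hs
      have e1 : ν₁ (p n ⁻¹' B) = μs n B := by
        rw [← h₁ n, Measure.map_apply (hpm n) hB]
      have e2 : ν₂ (p n ⁻¹' B) = μs n B := by
        rw [← h₂ n, Measure.map_apply (hpm n) hB]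
      rw [e1, e2]
    · simp [measure_univ]
  exact ⟨μ, ⟨MeasureTheory.Content.regular lam, hmap⟩,
    fun ν hν => huniq ν μ hν.2 hmap⟩
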